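/- The sequence w_k = ∏_{i=1}^k α_i^{1/α_i} (k ≥ 1) is increasing and bounded above by a real number w with w < 2.98; in particular w_k < 2.98 for all k ≥ 1. -/

import Mathlib

/-- Auxiliary: `alphaAux i` is `α_{i+1}`, with `α_1 = 2` and
`α_{i+1} = α_i² - α_i + 1`. -/
def alphaAux : ℕ → ℕ
  | 0 => 2
  | i + 1 => alphaAux i ^ 2 - alphaAux i + 1

/-- The sequence `α_1 = 2, α_2 = 3, α_3 = 7, α_4 = 43, ...`, indexed from `1`. -/
def alphaSeq (i : ℕ) : ℕ := alphaAux (i - 1)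

/-- `w_k = ∏_{i=1}^k α_i^(1/α_i)`, with real `α_i`-th roots. -/
noncomputable def wseq (k : ℕ) : ℝ :=
  ∏ i ∈ Finset.Icc 1 k, (alphaSeq i : ℝ) ^ ((alphaSeq i : ℝ)⁻¹)

lemma alphaAux_two_le (n : ℕ) : 2 ≤ alphaAux n := by
  induction n with
  | zero => simp [alphaAux]
  | succ n ih =>
    have h : alphaAux n * alphaAux n ≥ 2 * alphaAux n := Nat.mul_le_mul_right _ ih
    simp only [alphaAux, pow_two]
    omega

lemma alphaSeq_two_le (i : ℕ) : 2 ≤ alphaSeq i := alphaAux_two_le _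

lemma wseq_succ (k : ℕ) :
    wseq (k + 1) = wseq k * (alphaSeq (k+1) : ℝ) ^ ((alphaSeq (k+1) : ℝ)⁻¹) := by
  unfold wseq
  rw [Finset.prod_Icc_succ_top (by omega)]

lemma factor_one_lt (i : ℕ) : 1 < (alphaSeq i : ℝ) ^ ((alphaSeq i : ℝ)⁻¹) := by
  have h2 : (2:ℝ) ≤ (alphaSeq i : ℝ) := by exact_mod_cast alphaSeq_two_le i
  apply Real.one_lt_rpow_iff_of_pos (by linarith) |>.mpr
  left
  constructor
  · linarith
  · positivity

lemma wseq_pos (k : ℕ) : 0 < wseq k := by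
  apply Finset.prod_pos
  intro i _
  have h2 : (2:ℝ) ≤ (alphaSeq i : ℝ) := by exact_mod_cast alphaSeq_two_le i
  positivity

lemma wseq_strictMono : StrictMono wseq := by
  apply strictMono_nat_of_lt_succ
  intro k
  rw [wseq_succ]
  nth_rewrite 1 [← mul_one (wseq k)]
  exact mul_lt_mul_of_pos_left (factor_one_lt _) (wseq_pos k)

-- head factor bound
lemma factor_le (a : ℕ) (r : ℝ) (ha : 0 < a) (hr : 0 ≤ r) (h : (a:ℝ) ≤ r ^ a) :
    (a : ℝ) ^ ((a : ℝ)⁻¹) ≤ r := by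
  have h1 : (a : ℝ) ^ ((a : ℝ)⁻¹) ≤ (r ^ a) ^ ((a : ℝ)⁻¹) :=
    Real.rpow_le_rpow (by positivity) h (by positivity)
  calc (a : ℝ) ^ ((a : ℝ)⁻¹) ≤ (r ^ a) ^ ((a : ℝ)⁻¹) := h1
    _ = (r ^ ((a:ℝ))) ^ ((a : ℝ)⁻¹) := by rw [Real.rpow_natCast]
    _ = r ^ ((a:ℝ) * (a:ℝ)⁻¹) := by rw [← Real.rpow_mul hr]
    _ = r := by
        rw [mul_inv_cancel₀ (by exact_mod_cast ha.ne')]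
        exact Real.rpow_one r

lemma alphaSeq1 : alphaSeq 1 = 2 := rfl
lemma alphaSeq2 : alphaSeq 2 = 3 := rfl
lemma alphaSeq3 : alphaSeq 3 = 7 := rfl
lemma alphaSeq4 : alphaSeq 4 = 43 := by norm_num [alphaSeq, alphaAux]
lemma alphaSeq5 : alphaSeq 5 = 1807 := by norm_num [alphaSeq, alphaAux]
lemma alphaSeq6 : alphaSeq 6 = 3263443 := by norm_num [alphaSeq, alphaAux]

lemma wseq_head : wseq 5 ≤ 1.41422 * 1.4423 * 1.3206 * 1.0915 * 1.00417 := by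
  have h0 : wseq 0 = 1 := by simp [wseq]
  have e1 := wseq_succ 0
  have e2 := wseq_succ 1
  have e3 := wseq_succ 2
  have e4 := wseq_succ 3
  have e5 := wseq_succ 4
  rw [h0, one_mul] at e1
  rw [alphaSeq1] at e1
  rw [alphaSeq2] at e2
  rw [alphaSeq3] at e3
  rw [alphaSeq4] at e4
  rw [alphaSeq5] at e5
  have f1 : ((2:ℕ):ℝ) ^ (((2:ℕ):ℝ))⁻¹ ≤ 1.41422 :=
    factor_le 2 _ (by norm_num) (by norm_num) (by norm_num)
  have f2 : ((3:ℕ):ℝ) ^ (((3:ℕ):ℝ))⁻¹ ≤ 1.4423 :=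
    factor_le 3 _ (by norm_num) (by norm_num) (by norm_num)
  have f3 : ((7:ℕ):ℝ) ^ (((7:ℕ):ℝ))⁻¹ ≤ 1.3206 :=
    factor_le 7 _ (by norm_num) (by norm_num) (by norm_num)
  have f4 : ((43:ℕ):ℝ) ^ (((43:ℕ):ℝ))⁻¹ ≤ 1.0915 :=
    factor_le 43 _ (by norm_num) (by norm_num) (by norm_num)
  have f5 : ((1807:ℕ):ℝ) ^ (((1807:ℕ):ℝ))⁻¹ ≤ 1.00417 :=
    factor_le 1807 _ (by norm_num) (by norm_num) (by
      rw [show (1.00417:ℝ) = 100417 / 100000 by norm_num, div_pow, le_div_iff₀ (by positivity)]; push_cast; exact_mod_cast (by decide +kernel : 1807 * 100000 ^ 1807 ≤ 100417 ^ 1807))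
  rw [e5, e4, e3, e2, e1]
  have p1 : (0:ℝ) ≤ ((2:ℕ):ℝ) ^ (((2:ℕ):ℝ))⁻¹ := by positivity
  have p2 : (0:ℝ) ≤ ((3:ℕ):ℝ) ^ (((3:ℕ):ℝ))⁻¹ := by positivity
  have p3 : (0:ℝ) ≤ ((7:ℕ):ℝ) ^ (((7:ℕ):ℝ))⁻¹ := by positivity
  have p4 : (0:ℝ) ≤ ((43:ℕ):ℝ) ^ (((43:ℕ):ℝ))⁻¹ := by positivity
  gcongr

noncomputable def W5 : ℝ := 1.41422 * 1.4423 * 1.3206 * 1.0915 * 1.00417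

lemma wseq_head' : wseq 5 ≤ W5 := wseq_head

lemma sq_helper (a : ℕ) (h : 5 ≤ a) : 4 * a ≤ a ^ 2 - a + 1 := by
  have : 5 * a ≤ a * a := Nat.mul_le_mul_right a h
  simp only [pow_two]
  omega

lemma growth (k : ℕ) : 3263443 * 4 ^ k ≤ alphaSeq (6 + k) := by
  induction k with
  | zero => simp [alphaSeq6.symm.le]
  | succ k ih =>
    have h5' : 5 ≤ alphaSeq (6 + k) := by
      have h1 : (5:ℕ) ≤ 3263443 * 4 ^ k := by
        calc (5:ℕ) ≤ 3263443 := by norm_num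
          _ ≤ 3263443 * 4 ^ k := Nat.le_mul_of_pos_right _ (Nat.pow_pos (n := k) (by norm_num))
      omega
    have step : alphaSeq (6 + (k+1)) = alphaSeq (6+k) ^ 2 - alphaSeq (6+k) + 1 := by
      have h1 : 6 + (k+1) - 1 = (5+k)+1 := by omega
      have h2 : 6 + k - 1 = 5+k := by omega
      simp only [alphaSeq, h1, h2, alphaAux]
    calc 3263443 * 4 ^ (k+1) = 4 * (3263443 * 4 ^ k) := by ring
      _ ≤ 4 * alphaSeq (6+k) := Nat.mul_le_mul_left 4 ih
      _ ≤ alphaSeq (6+k) ^ 2 - alphaSeq (6+k) + 1 := sq_helper _ h5'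
      _ = alphaSeq (6 + (k+1)) := step.symm

lemma factor_le_exp (a : ℕ) (h : 2 ≤ a) :
    (a : ℝ) ^ ((a : ℝ)⁻¹) ≤ Real.exp (2 / Real.sqrt a) := by
  have hx : (2:ℝ) ≤ (a:ℝ) := by exact_mod_cast h
  have hx0 : (0:ℝ) < (a:ℝ) := by linarith
  have hs0 : 0 < Real.sqrt a := Real.sqrt_pos.mpr hx0
  rw [Real.rpow_def_of_pos hx0]
  apply Real.exp_le_exp.mpr
  have hlog : Real.log a ≤ 2 * Real.sqrt a := by
    have h1 : Real.log (Real.sqrt a) = Real.log a / 2 := Real.log_sqrt hx0.le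
    have h2 : Real.log (Real.sqrt a) ≤ Real.sqrt a - 1 := Real.log_le_sub_one_of_pos hs0
    linarith
  have hms : Real.sqrt a * Real.sqrt a = (a:ℝ) := Real.mul_self_sqrt hx0.le
  calc Real.log a * (a:ℝ)⁻¹ ≤ (2 * Real.sqrt a) * (a:ℝ)⁻¹ := by
        apply mul_le_mul_of_nonneg_right hlog (by positivity)
    _ = 2 / Real.sqrt a := by
        field_simp
        rw [pow_two, hms]

lemma sqrt_alpha_ge (k : ℕ) : (1806:ℝ) * 2 ^ k ≤ Real.sqrt (alphaSeq (6 + k)) := by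
  rw [show (1806:ℝ) * 2 ^ k = √(((1806:ℝ) * 2 ^ k)^2) from (Real.sqrt_sq (by positivity)).symm]
  apply Real.sqrt_le_sqrt
  have h := growth k
  have hc : ((3263443 * 4 ^ k : ℕ) : ℝ) ≤ ((alphaSeq (6+k) : ℕ) : ℝ) := by exact_mod_cast h
  push_cast at hc
  have h4 : ((2:ℝ)^k)^2 = (4:ℝ)^k := by
    rw [show (4:ℝ) = 2^2 by norm_num, ← pow_mul, ← pow_mul, mul_comm]
  nlinarith [h4, hc]

lemma tail_bound (k : ℕ) :
    wseq (5 + k) ≤ W5 * Real.exp ((2/1806) * ∑ j ∈ Finset.range k, (1/2:ℝ)^j) := by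
  induction k with
  | zero => simpa using wseq_head'
  | succ k ih =>
    have e : wseq (5 + (k+1)) = wseq (5+k) * (alphaSeq (6+k) : ℝ) ^ ((alphaSeq (6+k) : ℝ)⁻¹) := by
      rw [show 5 + (k+1) = (5+k) + 1 from by omega, wseq_succ, show 5+k+1 = 6+k from by omega]
    have hf : (alphaSeq (6+k) : ℝ) ^ ((alphaSeq (6+k) : ℝ)⁻¹) ≤
        Real.exp ((2/1806) * (1/2:ℝ)^k) := by
      refine (factor_le_exp _ (alphaSeq_two_le _)).trans (Real.exp_le_exp.mpr ?_)
      have hs := sqrt_alpha_ge k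
      have hpos : (0:ℝ) < 1806 * 2 ^ k := by positivity
      calc 2 / Real.sqrt (alphaSeq (6+k)) ≤ 2 / (1806 * 2 ^ k) := by
            apply div_le_div_of_nonneg_left (by norm_num) hpos hs
        _ = (2/1806) * (1/2:ℝ)^k := by
            rw [div_pow, one_pow]
            field_simp
    have hW : (0:ℝ) < W5 := by unfold W5; norm_num
    calc wseq (5+(k+1)) = wseq (5+k) * _ := e
      _ ≤ (W5 * Real.exp ((2/1806) * ∑ j ∈ Finset.range k, (1/2:ℝ)^j)) *
          Real.exp ((2/1806) * (1/2:ℝ)^k) := by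
          apply mul_le_mul ih hf (by positivity) (by positivity)
      _ = W5 * Real.exp ((2/1806) * ∑ j ∈ Finset.range (k+1), (1/2:ℝ)^j) := by
          rw [mul_assoc, ← Real.exp_add, Finset.sum_range_succ]
          congr 2
          ring

lemma main_bound (k : ℕ) : wseq k ≤ W5 * (903/901) := by
  have hW : (0:ℝ) < W5 := by unfold W5; norm_num
  have hexp : ∀ m : ℕ, Real.exp ((2/1806) * ∑ j ∈ Finset.range m, (1/2:ℝ)^j) ≤ 903/901 := by
    intro m
    have hsum : ∑ j ∈ Finset.range m, (1/2:ℝ)^j ≤ 2 := sum_geometric_two_le m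
    have harg : (2/1806) * ∑ j ∈ Finset.range m, (1/2:ℝ)^j ≤ 2/903 := by
      nlinarith
    calc Real.exp ((2/1806) * ∑ j ∈ Finset.range m, (1/2:ℝ)^j)
        ≤ Real.exp (2/903) := Real.exp_le_exp.mpr harg
      _ ≤ 903/901 := by
          have h2 : 1 - 2/903 ≤ Real.exp (-(2/903:ℝ)) := by
            have := Real.add_one_le_exp (-(2/903):ℝ); linarith
          have hp : (0:ℝ) < Real.exp (2/903) := Real.exp_pos _
          have hm : Real.exp (2/903) * Real.exp (-(2/903)) = 1 := by
            rw [← Real.exp_add]; norm_num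
          have key : Real.exp (2/903) * (1 - 2/903) ≤ 1 := by
            calc Real.exp (2/903) * (1 - 2/903)
                ≤ Real.exp (2/903) * Real.exp (-(2/903)) :=
                  mul_le_mul_of_nonneg_left h2 hp.le
              _ = 1 := hm
          linarith
  rcases le_or_gt k 5 with hk | hk
  · calc wseq k ≤ wseq 5 := wseq_strictMono.monotone hk
      _ ≤ W5 := wseq_head'
      _ ≤ W5 * (903/901) := by nlinarith
  · obtain ⟨m, rfl⟩ : ∃ m, k = 5 + m := ⟨k - 5, by omega⟩
    calc wseq (5+m) ≤ W5 * Real.exp ((2/1806) * ∑ j ∈ Finset.range m, (1/2:ℝ)^j) := tail_bound m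
      _ ≤ W5 * (903/901) := by
          apply mul_le_mul_of_nonneg_left (hexp m) hW.le

/-- The sequence `w_k = ∏_{i=1}^k α_i^(1/α_i)` is increasing and bounded above by
a real number `w < 2.98`; in particular `w_k < 2.98` for all `k ≥ 1`. -/
theorem wseq_increasing_bounded :
    (∀ k : ℕ, 1 ≤ k → wseq k < wseq (k + 1)) ∧
    (∃ w : ℝ, w < 2.98 ∧ ∀ k : ℕ, 1 ≤ k → wseq k < w) ∧
    (∀ k : ℕ, 1 ≤ k → wseq k < 2.98) := by
  have hb : ∀ k : ℕ, wseq k < 2.96 := fun k =>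
    lt_of_le_of_lt (main_bound k) (by unfold W5; norm_num)
  refine ⟨fun k _ => wseq_strictMono (Nat.lt_succ_self k),
    ⟨2.96, by norm_num, fun k _ => hb k⟩,
    fun k _ => (hb k).trans (by norm_num)⟩
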